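/- Let p, r, j, k be integers with 1 ≤ j ≤ p and 1 ≤ k ≤ r. If either (p < r and j ≥ k) or (p ≤ r and j > k), then the function x ↦ B≥_{p,j}(x) / B≥_{r,k}(x) is strictly increasing on the interval (0,1]. (Note that B≥_{r,k}(x) > 0 for x ∈ (0,1] since k ≤ r.) -/

import Mathlib

/-- `B≥_{n,k}(x) = Σ_{j=k}^{n} C(n,j)·x^j·(1−x)^{n−j} = P[Bin(n,x) ≥ k]` for `x ∈ [0,1]`. -/
noncomputable def Bge (n k : ℕ) (x : ℝ) : ℝ :=
  ∑ j ∈ Finset.Icc k n, (n.choose j : ℝ) * x ^ j * (1 - x) ^ (n - j)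

lemma asc_mono {m n : ℕ} (h : m ≤ n) : ∀ k, m.ascFactorial k ≤ n.ascFactorial k := by
  intro k; induction k with
  | zero => exact le_refl 1
  | succ k ih =>
    rw [Nat.ascFactorial_succ, Nat.ascFactorial_succ]
    exact Nat.mul_le_mul (by omega) ih

lemma Bge_continuous (n k : ℕ) : Continuous (Bge n k) := by
  unfold Bge
  exact continuous_finset_sum _ (fun i _ => by fun_prop)

lemma Bge_pos (n k : ℕ) (hkn : k ≤ n) {x : ℝ} (hx : 0 < x) (hx1 : x ≤ 1) :
    0 < Bge n k x := by
  unfold Bge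
  apply Finset.sum_pos'
  · intro i hi
    simp only [Finset.mem_Icc] at hi
    have : (0:ℝ) ≤ 1 - x := by linarith
    positivity
  · refine ⟨n, Finset.mem_Icc.2 ⟨hkn, le_refl n⟩, ?_⟩
    simp only [Nat.choose_self, Nat.cast_one, Nat.sub_self, pow_zero]
    positivity

-- core factorial inequality
lemma fact_key (p r j k a : ℕ) (hk1 : 1 ≤ k) (hkj : k ≤ j) (hjp : j ≤ p)
    (hka : k ≤ a) (har : a ≤ r) (hbp : a + (j - k) ≤ p) (hsum : p + k < j + r) :
    Nat.factorial (j-1) * Nat.factorial (p-j) * Nat.factorial a * Nat.factorial (r-a)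
      ≤ Nat.factorial (k-1) * Nat.factorial (r-k) * Nat.factorial (a + (j-k)) * Nat.factorial (p - (a + (j-k))) := by
  set d := j - k with hd
  set e := a - k with he
  set b := a + d with hb
  have h1 : j - 1 = (k-1) + d := by omega
  have h2 : r - k = (r-a) + e := by omega
  have h3 : p - j = (p-b) + e := by omega
  have e1 : Nat.factorial (j-1) = Nat.factorial (k-1) * Nat.ascFactorial ((k-1)+1) d := by
    rw [Nat.factorial_mul_ascFactorial, h1]
  have e2 : Nat.factorial (r-k) = Nat.factorial (r-a) * Nat.ascFactorial ((r-a)+1) e := by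
    rw [Nat.factorial_mul_ascFactorial, h2]
  have e3 : Nat.factorial (p-j) = Nat.factorial (p-b) * Nat.ascFactorial ((p-b)+1) e := by
    rw [Nat.factorial_mul_ascFactorial, h3]
  have e4 : Nat.factorial b = Nat.factorial a * Nat.ascFactorial (a+1) d := by
    rw [Nat.factorial_mul_ascFactorial]
  have m1 : Nat.ascFactorial ((k-1)+1) d ≤ Nat.ascFactorial (a+1) d := asc_mono (by omega) d
  have m2 : Nat.ascFactorial ((p-b)+1) e ≤ Nat.ascFactorial ((r-a)+1) e := asc_mono (by omega) e
  calc Nat.factorial (j-1) * Nat.factorial (p-j) * Nat.factorial a * Nat.factorial (r-a)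
      = (Nat.factorial (k-1) * Nat.factorial (p-b) * Nat.factorial a * Nat.factorial (r-a))
        * (Nat.ascFactorial ((k-1)+1) d * Nat.ascFactorial ((p-b)+1) e) := by rw [e1, e3]; ring
    _ ≤ (Nat.factorial (k-1) * Nat.factorial (p-b) * Nat.factorial a * Nat.factorial (r-a))
        * (Nat.ascFactorial (a+1) d * Nat.ascFactorial ((r-a)+1) e) :=
        Nat.mul_le_mul_left _ (Nat.mul_le_mul m1 m2)
    _ = Nat.factorial (k-1) * Nat.factorial (r-k) * Nat.factorial b * Nat.factorial (p-b) := by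
        rw [e2, e4]; ring

lemma choose_key (p r j k a : ℕ) (hk1 : 1 ≤ k) (hkj : k ≤ j) (hjp : j ≤ p)
    (hka : k ≤ a) (har : a ≤ r) (hbp : a + (j - k) ≤ p) (hsum : p + k < j + r) :
    k * r.choose k * p.choose (a + (j-k)) ≤ j * p.choose j * r.choose a := by
  set b := a + (j - k) with hb
  have core : k * Nat.factorial j * Nat.factorial (p-j) * Nat.factorial a * Nat.factorial (r-a)
      ≤ j * Nat.factorial k * Nat.factorial (r-k) * Nat.factorial b * Nat.factorial (p-b) := by
    have hj' : Nat.factorial j = j * Nat.factorial (j-1) := by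
      conv_lhs => rw [show j = (j-1)+1 by omega]
      rw [Nat.factorial_succ]; congr 1; omega
    have hk' : Nat.factorial k = k * Nat.factorial (k-1) := by
      conv_lhs => rw [show k = (k-1)+1 by omega]
      rw [Nat.factorial_succ]; congr 1; omega
    rw [hj', hk']
    have := fact_key p r j k a hk1 hkj hjp hka har hbp hsum
    calc k * (j * Nat.factorial (j-1)) * Nat.factorial (p-j) * Nat.factorial a * Nat.factorial (r-a)
        = (k*j) * (Nat.factorial (j-1) * Nat.factorial (p-j) * Nat.factorial a * Nat.factorial (r-a)) := by ring
      _ ≤ (k*j) * (Nat.factorial (k-1) * Nat.factorial (r-k) * Nat.factorial b * Nat.factorial (p-b)) :=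
          Nat.mul_le_mul_left _ this
      _ = j * (k * Nat.factorial (k-1)) * Nat.factorial (r-k) * Nat.factorial b * Nat.factorial (p-b) := by ring
  have M : 0 < Nat.factorial j * Nat.factorial (p-j) * Nat.factorial a * Nat.factorial (r-a)
      * (Nat.factorial k * Nat.factorial (r-k) * Nat.factorial b * Nat.factorial (p-b)) := by
    positivity
  apply Nat.le_of_mul_le_mul_right _ M
  have c1 : r.choose k * (Nat.factorial k * Nat.factorial (r-k)) = Nat.factorial r := by
    rw [← mul_assoc]; exact Nat.choose_mul_factorial_mul_factorial (by omega)
  have c2 : p.choose b * (Nat.factorial b * Nat.factorial (p-b)) = Nat.factorial p := by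
    rw [← mul_assoc]; exact Nat.choose_mul_factorial_mul_factorial hbp
  have c3 : p.choose j * (Nat.factorial j * Nat.factorial (p-j)) = Nat.factorial p := by
    rw [← mul_assoc]; exact Nat.choose_mul_factorial_mul_factorial hjp
  have c4 : r.choose a * (Nat.factorial a * Nat.factorial (r-a)) = Nat.factorial r := by
    rw [← mul_assoc]; exact Nat.choose_mul_factorial_mul_factorial har
  calc k * r.choose k * p.choose b * (Nat.factorial j * Nat.factorial (p-j) * Nat.factorial a * Nat.factorial (r-a)
      * (Nat.factorial k * Nat.factorial (r-k) * Nat.factorial b * Nat.factorial (p-b)))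
      = (k * Nat.factorial j * Nat.factorial (p-j) * Nat.factorial a * Nat.factorial (r-a))
        * ((r.choose k * (Nat.factorial k * Nat.factorial (r-k))) * (p.choose b * (Nat.factorial b * Nat.factorial (p-b)))) := by ring
    _ = (k * Nat.factorial j * Nat.factorial (p-j) * Nat.factorial a * Nat.factorial (r-a)) * (Nat.factorial r * Nat.factorial p) := by rw [c1, c2]
    _ ≤ (j * Nat.factorial k * Nat.factorial (r-k) * Nat.factorial b * Nat.factorial (p-b)) * (Nat.factorial r * Nat.factorial p) :=
        Nat.mul_le_mul_right _ core
    _ = (j * Nat.factorial k * Nat.factorial (r-k) * Nat.factorial b * Nat.factorial (p-b))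
        * ((p.choose j * (Nat.factorial j * Nat.factorial (p-j))) * (r.choose a * (Nat.factorial a * Nat.factorial (r-a)))) := by rw [c3, c4]; ring
    _ = j * p.choose j * r.choose a * (Nat.factorial j * Nat.factorial (p-j) * Nat.factorial a * Nat.factorial (r-a)
      * (Nat.factorial k * Nat.factorial (r-k) * Nat.factorial b * Nat.factorial (p-b))) := by ring

lemma Bge_hasDerivAt (n k : ℕ) (hk : 1 ≤ k) (hkn : k ≤ n) (x : ℝ) :
    HasDerivAt (Bge n k) ((k : ℝ) * n.choose k * x ^ (k-1) * (1-x) ^ (n-k)) x := by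
  set u : ℕ → ℝ := fun i => (i : ℝ) * n.choose i * x ^ (i-1) * (1-x) ^ (n-i) with hu
  have key : HasDerivAt (Bge n k) (∑ i ∈ Finset.Icc k n, (u i - u (i+1))) x := by
    apply HasDerivAt.fun_sum
    intro i hi
    simp only [Finset.mem_Icc] at hi
    have h1 : HasDerivAt (fun y : ℝ => (n.choose i : ℝ) * y ^ i) ((n.choose i : ℝ) * ((i:ℝ) * x ^ (i-1))) x :=
      (hasDerivAt_pow i x).const_mul _
    have h2 : HasDerivAt (fun y : ℝ => (1 - y) ^ (n-i)) (((n-i : ℕ) : ℝ) * (1-x) ^ (n-i-1) * (-1)) x := by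
      have := ((hasDerivAt_pow (n-i) (1-x)).comp x ((hasDerivAt_id x).const_sub 1))
      simpa [Function.comp_def] using this
    have h3 := h1.fun_mul h2
    convert h3 using 1; rfl
    have hc : ((i:ℝ)+1) * (n.choose (i+1) : ℝ) = (n.choose i : ℝ) * ((n - i : ℕ) : ℝ) := by
      have h := congrArg (Nat.cast : ℕ → ℝ) (Nat.choose_succ_right_eq n i)
      push_cast at h
      linarith [h]
    have he1 : (i+1) - 1 = i := by omega
    have he2 : n - (i+1) = n - i - 1 := by omega
    simp only [hu, he1, he2]
    push_cast
    linear_combination (-(x ^ i) * (1 - x) ^ (n - i - 1)) * hc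
  have tele : (∑ i ∈ Finset.Icc k n, (u i - u (i+1))) = u k := by
    rw [← Finset.Ico_add_one_right_eq_Icc, Finset.sum_Ico_eq_sum_range]
    have := Finset.sum_range_sub' (fun t => u (k + t)) (n + 1 - k)
    simp only [Nat.add_zero] at this
    have h0 : ∀ i, u (k + (i+1)) = u (k + i + 1) := fun i => by ring_nf
    calc (∑ i ∈ Finset.range (n+1-k), (u (k+i) - u (k+i+1)))
        = ∑ i ∈ Finset.range (n+1-k), ((fun t => u (k+t)) i - (fun t => u (k+t)) (i+1)) := by
          apply Finset.sum_congr rfl; intro i _; simp [Nat.add_assoc]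
      _ = u k - u (k + (n+1-k)) := this
      _ = u k := by
          have : k + (n+1-k) = n+1 := by omega
          rw [this]
          have : u (n+1) = 0 := by simp [hu, Nat.choose_succ_self]
          rw [this, sub_zero]
  rw [tele] at key
  exact key


lemma num_pos (p r j k : ℕ) (hj1 : 1 ≤ j) (hjp : j ≤ p) (hk1 : 1 ≤ k) (hkr : k ≤ r)
    (hkj : k ≤ j) (hsum : p + k < j + r) {x : ℝ} (hx : 0 < x) (hx1 : x < 1) :
    ((k:ℝ) * r.choose k * x ^ (k-1) * (1-x) ^ (r-k)) * Bge p j x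
      < ((j:ℝ) * p.choose j * x ^ (j-1) * (1-x) ^ (p-j)) * Bge r k x := by
  have h1x : (0:ℝ) < 1 - x := by linarith
  set d := j - k with hd
  set f : ℕ → ℝ := fun i => (j:ℝ) * p.choose j * r.choose i * x ^ (j-1+i) * (1-x) ^ (p+r-j-i) with hf
  have lhs_eq : ((k:ℝ) * r.choose k * x ^ (k-1) * (1-x) ^ (r-k)) * Bge p j x
      = ∑ i ∈ Finset.Icc k (p-d),
          (k:ℝ) * r.choose k * p.choose (i+d) * x ^ (j-1+i) * (1-x) ^ (p+r-j-i) := by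
    unfold Bge
    rw [Finset.mul_sum]
    rw [show Finset.Icc j p = Finset.map (addRightEmbedding d) (Finset.Icc k (p-d)) by
      rw [Finset.map_add_right_Icc]; congr 1 <;> omega]
    rw [Finset.sum_map]
    apply Finset.sum_congr rfl
    intro i hi
    simp only [Finset.mem_Icc] at hi
    simp only [addRightEmbedding_apply]
    rw [show j-1+i = (k-1)+(i+d) by omega, show p+r-j-i = (r-k)+(p-(i+d)) by omega,
      pow_add, pow_add]
    ring
  have rhs_eq : ((j:ℝ) * p.choose j * x ^ (j-1) * (1-x) ^ (p-j)) * Bge r k x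
      = ∑ i ∈ Finset.Icc k r, f i := by
    unfold Bge
    rw [Finset.mul_sum]
    apply Finset.sum_congr rfl
    intro i hi
    simp only [Finset.mem_Icc] at hi
    simp only [hf]
    rw [show j-1+i = (j-1) + i by omega, show p+r-j-i = (p-j) + (r-i) by omega,
      pow_add, pow_add]
    ring
  rw [lhs_eq, rhs_eq]
  calc ∑ i ∈ Finset.Icc k (p-d),
        (k:ℝ) * r.choose k * p.choose (i+d) * x ^ (j-1+i) * (1-x) ^ (p+r-j-i)
      ≤ ∑ i ∈ Finset.Icc k (p-d), f i := by
        apply Finset.sum_le_sum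
        intro i hi
        simp only [Finset.mem_Icc] at hi
        have key : (k * r.choose k * p.choose (i+d) : ℝ) ≤ (j * p.choose j * r.choose i : ℝ) := by
          have := choose_key p r j k i hk1 hkj hjp hi.1 (by omega) (by omega) hsum
          exact_mod_cast this
        simp only [hf]
        have hxp : (0:ℝ) ≤ x ^ (j-1+i) * (1-x) ^ (p+r-j-i) := by positivity
        calc (k:ℝ) * r.choose k * p.choose (i+d) * x ^ (j-1+i) * (1-x) ^ (p+r-j-i)
            = (k * r.choose k * p.choose (i+d) : ℝ) * (x ^ (j-1+i) * (1-x) ^ (p+r-j-i)) := by ring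
          _ ≤ (j * p.choose j * r.choose i : ℝ) * (x ^ (j-1+i) * (1-x) ^ (p+r-j-i)) :=
              mul_le_mul_of_nonneg_right key hxp
          _ = (j:ℝ) * p.choose j * r.choose i * x ^ (j-1+i) * (1-x) ^ (p+r-j-i) := by ring
    _ < ∑ i ∈ Finset.Icc k r, f i := by
        apply Finset.sum_lt_sum_of_subset (Finset.Icc_subset_Icc_right (by omega))
          (i := r) (Finset.mem_Icc.2 ⟨hkr, le_refl r⟩)
        · simp only [Finset.mem_Icc]; omega
        · simp only [hf]
          have hcp : (0:ℝ) < p.choose j := by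
            exact_mod_cast Nat.choose_pos hjp
          have hcr : (0:ℝ) < r.choose r := by
            exact_mod_cast Nat.choose_pos (le_refl r)
          positivity
        · intro i hi _
          simp only [hf]
          positivity

theorem stmt9 (p r j k : ℕ) (hj1 : 1 ≤ j) (hjp : j ≤ p) (hk1 : 1 ≤ k) (hkr : k ≤ r)
    (hcase : (p < r ∧ k ≤ j) ∨ (p ≤ r ∧ k < j)) :
    StrictMonoOn (fun x => Bge p j x / Bge r k x) (Set.Ioc (0 : ℝ) 1) := by
  have hkj : k ≤ j := by omega
  have hsum : p + k < j + r := by omega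
  apply strictMonoOn_of_deriv_pos (convex_Ioc 0 1)
  · apply ContinuousOn.div (Bge_continuous p j).continuousOn (Bge_continuous r k).continuousOn
    intro x hx
    exact (Bge_pos r k hkr hx.1 hx.2).ne'
  · intro x hx
    rw [interior_Ioc] at hx
    have hG0 : Bge r k x ≠ 0 := (Bge_pos r k hkr hx.1 hx.2.le).ne'
    have hF := Bge_hasDerivAt p j hj1 hjp x
    have hG := Bge_hasDerivAt r k hk1 hkr x
    have hdiv := hF.div hG hG0
    rw [show (fun x => Bge p j x / Bge r k x) = Bge p j / Bge r k from rfl, hdiv.deriv]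
    apply div_pos
    · have := num_pos p r j k hj1 hjp hk1 hkr hkj hsum hx.1 hx.2
      linarith [this]
    · positivity
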